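/- arXiv:1201.0430 — 2 statements merged into one kernel-verified Lean document; each statement's English description precedes it below -/
import Mathlib

section
/- For every $N \ge 1$, the probability under the uniform (Bernoulli(1/2,1/2)) measure on pairs $(c,d) \in \{1,2\}^N \times \{1,2\}^N$ that $\bar f_N(c,d) < 0.01$ is at most $e^{-rN}$ for some absolute constant $r > 0$, where $\bar f_N(c,d) = 1 - j/N$ and $j$ is the length of the longest common subsequence of $c$ and $d$. -/
/-- The length of the longest common subsequence of two words `c d : Fin N → Fin 2`. -/
noncomputable def lcsLen {N : ℕ} (c d : Fin N → Fin 2) : ℕ :=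
  sSup {j : ℕ | ∃ n m : Fin j → Fin N, StrictMono n ∧ StrictMono m ∧
    ∀ i : Fin j, c (n i) = d (m i)}

/-- If `k ≤ lcsLen c d` then there is a common subsequence of length `k`. -/
theorem lcs_witness {N k : ℕ} (c d : Fin N → Fin 2) (hk : k ≤ lcsLen c d) :
    ∃ n m : Fin k → Fin N, StrictMono n ∧ StrictMono m ∧ ∀ i : Fin k, c (n i) = d (m i) := by
  set J := {j : ℕ | ∃ n m : Fin j → Fin N, StrictMono n ∧ StrictMono m ∧
      ∀ i : Fin j, c (n i) = d (m i)} with hJ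
  have h0 : (0 : ℕ) ∈ J := ⟨fun i => i.elim0, fun i => i.elim0, fun a => a.elim0,
    fun a => a.elim0, fun i => i.elim0⟩
  have hbdd : BddAbove J := by
    refine ⟨N, fun j hj => ?_⟩
    obtain ⟨n, _, hn, _, _⟩ := hj
    simpa using Fintype.card_le_of_injective n hn.injective
  have hmem : sSup J ∈ J := Nat.sSup_mem ⟨0, h0⟩ hbdd
  obtain ⟨n, m, hn, hm, hcd⟩ := hmem
  exact ⟨n ∘ Fin.castLE hk, m ∘ Fin.castLE hk, hn.comp (Fin.strictMono_castLE hk),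
    hm.comp (Fin.strictMono_castLE hk), fun i => hcd _⟩

/-- Counting bound: pairs admitting a common subsequence of length `k`. -/
theorem count_bound (N k : ℕ) :
    Nat.card {p : (Fin N → Fin 2) × (Fin N → Fin 2) //
        ∃ n m : Fin k → Fin N, StrictMono n ∧ StrictMono m ∧
          ∀ i : Fin k, p.1 (n i) = p.2 (m i)} ≤
      N.choose k * N.choose k * 2 ^ N * 2 ^ (N - k) := by
  classical
  have hcompl : ∀ (T : {T : Finset (Fin N) // T.card = k}), (T.1ᶜ).card = N - k := by
    intro T
    rw [Finset.card_compl, T.2, Fintype.card_fin]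
  set D := ({S : Finset (Fin N) // S.card = k} × {T : Finset (Fin N) // T.card = k} ×
    (Fin N → Fin 2) × (Fin (N - k) → Fin 2)) with hD
  set Ψ : D → (Fin N → Fin 2) × (Fin N → Fin 2) := fun q =>
    (q.2.2.1, fun x =>
      if h : x ∈ q.2.1.1 then
        q.2.2.1 (q.1.1.orderEmbOfFin q.1.2 ((q.2.1.1.orderIsoOfFin q.2.1.2).symm ⟨x, h⟩))
      else q.2.2.2 (((q.2.1.1ᶜ).orderIsoOfFin (hcompl q.2.1)).symm
        ⟨x, Finset.mem_compl.2 h⟩)) with hΨ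
  have hsub : {p : (Fin N → Fin 2) × (Fin N → Fin 2) |
      ∃ n m : Fin k → Fin N, StrictMono n ∧ StrictMono m ∧
        ∀ i : Fin k, p.1 (n i) = p.2 (m i)} ⊆ Set.range Ψ := by
    rintro ⟨c, d⟩ ⟨n, m, hn, hm, hcd⟩
    have hS : (Finset.image n Finset.univ).card = k := by
      rw [Finset.card_image_of_injective _ hn.injective, Finset.card_univ, Fintype.card_fin]
    have hT : (Finset.image m Finset.univ).card = k := by
      rw [Finset.card_image_of_injective _ hm.injective, Finset.card_univ, Fintype.card_fin]
    set T := Finset.image m Finset.univ with hTdef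
    refine ⟨⟨⟨_, hS⟩, ⟨T, hT⟩, c, fun i => d ((Tᶜ).orderEmbOfFin (hcompl ⟨T, hT⟩) i)⟩, ?_⟩
    have hmeq : m = (T.orderEmbOfFin hT) := by
      refine Finset.orderEmbOfFin_unique hT (fun x => ?_) hm
      exact Finset.mem_image_of_mem _ (Finset.mem_univ x)
    have hneq : n = ((Finset.image n Finset.univ).orderEmbOfFin hS) := by
      refine Finset.orderEmbOfFin_unique hS (fun x => ?_) hn
      exact Finset.mem_image_of_mem _ (Finset.mem_univ x)
    have hcd' : ∀ i : Fin k, c (n i) = d (m i) := hcd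
    simp only [hΨ, Prod.mk.injEq]
    refine ⟨trivial, funext fun x => ?_⟩
    by_cases h : x ∈ T
    · simp only [h, dif_pos]
      obtain ⟨i, _, hi⟩ := Finset.mem_image.1 h
      have hiso : T.orderIsoOfFin hT i = ⟨x, h⟩ := by
        ext
        rw [Finset.coe_orderIsoOfFin_apply, ← hmeq, hi]
      rw [← hiso, OrderIso.symm_apply_apply, ← hneq, hcd' i, hi]
    · simp only [h, dif_neg, not_false_iff]
      rw [← Finset.coe_orderIsoOfFin_apply, OrderIso.apply_symm_apply]
  calc Nat.card {p : (Fin N → Fin 2) × (Fin N → Fin 2) //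
        ∃ n m : Fin k → Fin N, StrictMono n ∧ StrictMono m ∧
          ∀ i : Fin k, p.1 (n i) = p.2 (m i)}
      ≤ Nat.card (Set.range Ψ) := Nat.card_mono (Set.toFinite _) hsub
    _ ≤ Nat.card D := Nat.card_le_card_of_surjective
        (Set.rangeFactorization Ψ) Set.rangeFactorization_surjective
    _ = N.choose k * N.choose k * 2 ^ N * 2 ^ (N - k) := by
        simp [hD, Nat.card_eq_fintype_card, Fintype.card_finset_len, Fintype.card_fun,
          mul_assoc]

theorem choose_pow_bound (a m : ℕ) : Nat.choose (a + m) m * 2 ^ (7 * a) ≤ 129 ^ (a + m) := by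
  have h : (129 : ℕ) ^ (a + m) = (128 + 1) ^ (a + m) := by norm_num
  rw [h, add_pow]
  have hmem : a ∈ Finset.range (a + m + 1) := by simp
  have hs := Finset.single_le_sum
    (f := fun i => 128 ^ i * 1 ^ (a + m - i) * Nat.choose (a + m) i)
    (fun i _ => Nat.zero_le _) hmem
  have hch : Nat.choose (a + m) a = Nat.choose (a + m) m := by
    rw [← Nat.choose_symm (by omega : a ≤ a + m)]
    congr 1
    omega
  calc Nat.choose (a + m) m * 2 ^ (7 * a)
      = 128 ^ a * 1 ^ (a + m - a) * Nat.choose (a + m) a := by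
        rw [hch, one_pow]
        have : (128:ℕ) ^ a = 2 ^ (7 * a) := by
          rw [show (128:ℕ) = 2 ^ 7 by norm_num, ← pow_mul]
        rw [this]
        ring
    _ ≤ _ := hs

theorem nat_main (a m : ℕ) (h : 99 * m ≤ a) :
    (Nat.choose (a + m) m) ^ 200 * 2 ^ (100 * m) * 3 ^ (50 * (a + m)) ≤ 2 ^ (100 * (a + m)) := by
  have key : (129:ℕ) ^ 200 * 2 ^ 15 * 3 ^ 50 ≤ 2 ^ 1500 := by
    rw [show (1500:ℕ) = 150 * 10 by norm_num, pow_mul]; norm_num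
  refine Nat.le_of_mul_le_mul_right ?_ (pow_pos (by norm_num : 0 < 2) (1400 * (a + m)))
  calc (Nat.choose (a + m) m) ^ 200 * 2 ^ (100 * m) * 3 ^ (50 * (a + m)) * 2 ^ (1400 * (a + m))
      = (Nat.choose (a + m) m * 2 ^ (7 * a)) ^ 200 * 2 ^ (1500 * m) * 3 ^ (50 * (a + m)) := by
        ring
    _ ≤ (129 ^ (a + m)) ^ 200 * 2 ^ (15 * (a + m)) * 3 ^ (50 * (a + m)) := by
        refine Nat.mul_le_mul (Nat.mul_le_mul ?_ ?_) le_rfl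
        · exact Nat.pow_le_pow_left (choose_pow_bound a m) 200
        · exact Nat.pow_le_pow_right (by norm_num) (by omega)
    _ = (129 ^ 200 * 2 ^ 15 * 3 ^ 50) ^ (a + m) := by
        rw [mul_pow, mul_pow]
        rw [← pow_mul, mul_comm (a + m) 200, pow_mul]
        rw [pow_mul, pow_mul]
    _ ≤ (2 ^ 1500) ^ (a + m) := Nat.pow_le_pow_left key (a + m)
    _ = 2 ^ (100 * (a + m)) * 2 ^ (1400 * (a + m)) := by
        rw [← pow_mul, ← pow_add]
        congr 1
        ring

set_option maxRecDepth 10000 in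
theorem real_main (N k : ℕ) (hN : 1 ≤ N) (hk : k = 99 * N / 100 + 1) :
    ((N.choose k * N.choose k * 2 ^ N * 2 ^ (N - k) : ℕ) : ℝ)
      ≤ Real.exp (-(1/2 : ℝ) * N) * 2 ^ (2 * N) := by
  have hkN : k ≤ N := by omega
  have hC : N.choose k = N.choose (N - k) := (Nat.choose_symm hkN).symm
  have hnat := nat_main (N - (N - k)) (N - k) (by omega)
  rw [show N - (N - k) + (N - k) = N by omega] at hnat
  rw [← hC] at hnat
  -- hnat : N.choose k ^ 200 * 2 ^ (100 * (N - k)) * 3 ^ (50 * N) ≤ 2 ^ (100 * N)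
  set C : ℝ := (N.choose k : ℝ) with hCdef
  have hnatR : C ^ 200 * 2 ^ (100 * (N - k)) * 3 ^ (50 * N) ≤ 2 ^ (100 * N) := by
    rw [hCdef]
    exact_mod_cast hnat
  have hexp3 : Real.exp (50 * N) ≤ 3 ^ (50 * N) := by
    have h1 : Real.exp ((50 * N : ℕ) : ℝ) = Real.exp 1 ^ (50 * N : ℕ) := by
      rw [← Real.exp_nat_mul, mul_one]
    have h2 : Real.exp 1 ≤ 3 := Real.exp_one_lt_d9.le.trans (by norm_num)
    calc Real.exp (50 * N) = Real.exp 1 ^ (50 * N : ℕ) := by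
          rw [← h1]; norm_num
      _ ≤ 3 ^ (50 * N : ℕ) := pow_le_pow_left₀ (Real.exp_pos 1).le h2 _
  have h1 : C ^ 200 * 2 ^ (100 * (N - k)) * Real.exp (50 * N) ≤ 2 ^ (100 * N) := by
    calc C ^ 200 * 2 ^ (100 * (N - k)) * Real.exp (50 * N)
        ≤ C ^ 200 * 2 ^ (100 * (N - k)) * 3 ^ (50 * N) :=
          mul_le_mul_of_nonneg_left hexp3 (by positivity)
      _ ≤ 2 ^ (100 * N) := hnatR
  push_cast
  rw [← hCdef]
  refine (pow_le_pow_iff_left₀ (a := C * C * 2 ^ N * 2 ^ (N - k))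
    (b := Real.exp (-(1/2 : ℝ) * N) * 2 ^ (2 * N)) (by positivity) (by positivity)
    (by norm_num : (100:ℕ) ≠ 0)).1 ?_
  have hXpow : (C * C * 2 ^ N * 2 ^ (N - k)) ^ (100:ℕ)
      = C ^ 200 * 2 ^ (100 * N) * 2 ^ (100 * (N - k)) := by ring
  have hYexp : (Real.exp (-(1/2 : ℝ) * N)) ^ (100:ℕ) = Real.exp (-(50 * N)) := by
    rw [← Real.exp_nat_mul]
    congr 1
    push_cast
    ring
  have hYpow : (Real.exp (-(1/2 : ℝ) * N) * 2 ^ (2 * N)) ^ (100:ℕ)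
      = Real.exp (-(50 * N)) * 2 ^ (200 * N) := by
    rw [mul_pow, hYexp]
    congr 1
    rw [← pow_mul]
    congr 1
    ring
  rw [hXpow, hYpow]
  have hcancel : Real.exp (50 * (N:ℝ)) * Real.exp (-(50 * N)) = 1 := by
    rw [← Real.exp_add]
    simp
  calc C ^ 200 * 2 ^ (100 * N) * 2 ^ (100 * (N - k))
      = C ^ 200 * 2 ^ (100 * N) * 2 ^ (100 * (N - k))
          * (Real.exp (50 * N) * Real.exp (-(50 * N))) := by
        rw [hcancel, mul_one]
    _ = (C ^ 200 * 2 ^ (100 * (N - k)) * Real.exp (50 * N))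
          * (Real.exp (-(50 * N)) * 2 ^ (100 * N)) := by ring
    _ ≤ 2 ^ (100 * N) * (Real.exp (-(50 * N)) * 2 ^ (100 * N)) :=
        mul_le_mul_of_nonneg_right h1 (by positivity)
    _ = Real.exp (-(50 * N)) * 2 ^ (200 * N) := by ring

/-- There is an absolute constant `r > 0` such that for every `N ≥ 1`, the
probability under the uniform measure on pairs of binary words of length `N` that
`f̄_N (c,d) = 1 - lcsLen c d / N < 0.01` is at most `e^{-rN}`. -/
theorem stmt_8 : ∃ r : ℝ, 0 < r ∧ ∀ N : ℕ, 1 ≤ N →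
    (Nat.card {p : (Fin N → Fin 2) × (Fin N → Fin 2) //
        1 - (lcsLen p.1 p.2 : ℝ) / N < 0.01} : ℝ)
      ≤ Real.exp (-r * N) * 2 ^ (2 * N) := by
  refine ⟨1/2, by norm_num, fun N hN => ?_⟩
  set k := 99 * N / 100 + 1 with hk
  have hNpos : (0:ℝ) < N := by exact_mod_cast hN
  have hsub : {p : (Fin N → Fin 2) × (Fin N → Fin 2) |
      1 - (lcsLen p.1 p.2 : ℝ) / N < 0.01} ⊆
      {p : (Fin N → Fin 2) × (Fin N → Fin 2) |
        ∃ n m : Fin k → Fin N, StrictMono n ∧ StrictMono m ∧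
          ∀ i : Fin k, p.1 (n i) = p.2 (m i)} := by
    intro p hp
    refine lcs_witness p.1 p.2 ?_
    have hj : (0.99 : ℝ) * N < (lcsLen p.1 p.2 : ℝ) := by
      have hp' : 1 - (lcsLen p.1 p.2 : ℝ) / N < 0.01 := hp
      have h1 : (0.99 : ℝ) < (lcsLen p.1 p.2 : ℝ) / N := by
        norm_num at hp' ⊢
        linarith
      calc (0.99 : ℝ) * N < ((lcsLen p.1 p.2 : ℝ) / N) * N := by
            exact mul_lt_mul_of_pos_right h1 hNpos
        _ = (lcsLen p.1 p.2 : ℝ) := by field_simp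
    have hj' : 99 * N < 100 * lcsLen p.1 p.2 := by
      have : (99 * N : ℝ) < 100 * (lcsLen p.1 p.2 : ℝ) := by linarith
      exact_mod_cast this
    omega
  have hcard : Nat.card {p : (Fin N → Fin 2) × (Fin N → Fin 2) //
        1 - (lcsLen p.1 p.2 : ℝ) / N < 0.01}
      ≤ N.choose k * N.choose k * 2 ^ N * 2 ^ (N - k) :=
    le_trans (Nat.card_mono (Set.toFinite _) hsub) (count_bound N k)
  calc (Nat.card {p : (Fin N → Fin 2) × (Fin N → Fin 2) //
        1 - (lcsLen p.1 p.2 : ℝ) / N < 0.01} : ℝ)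
      ≤ ((N.choose k * N.choose k * 2 ^ N * 2 ^ (N - k) : ℕ) : ℝ) := by exact_mod_cast hcard
    _ ≤ Real.exp (-(1/2 : ℝ) * N) * 2 ^ (2 * N) := real_main N k hN hk
end

section
/- Let $a, b : \mathbb{Z} \to \mathbb{Z}$ be sequences with values in $\{1, 2\}$, chosen i.i.d. uniformly and independently of each other. For $N \ge 1$, the probability that there exist integers $s, t \in [-100N, 100N]$ and $K > N$ such that the shifted length-$K$ words $(a_{s+1}, \dots, a_{s+K})$ and $(b_{t+1}, \dots, b_{t+K})$ have a common subsequence of length at least $0.99K$ is at most $e^{-rN}$ for some absolute constant $r > 0$ and all sufficiently large $N$. -/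
open MeasureTheory ProbabilityTheory
open scoped ENNReal


lemma fin2_measurable (s : Set (Fin 2)) : MeasurableSet s := s.to_countable.measurableSet

lemma perEvent {Ω : Type} [MeasurableSpace Ω] (μ : Measure Ω)
    (a b : ℤ → Ω → Fin 2)
    (hindep : iIndepFun (m := fun _ : ℤ ⊕ ℤ => (inferInstance : MeasurableSpace (Fin 2)))
      (fun o : ℤ ⊕ ℤ => Sum.elim a b o) μ)
    (ha : ∀ (i : ℤ) (v : Fin 2), μ {ω | a i ω = v} = 1 / 2)
    (hb : ∀ (i : ℤ) (v : Fin 2), μ {ω | b i ω = v} = 1 / 2)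
    (j : ℕ) (x y : Fin j → ℤ) (hx : Function.Injective x) (hy : Function.Injective y) :
    μ {ω | ∀ i : Fin j, a (x i) ω = b (y i) ω} ≤ (2 : ℝ≥0∞)⁻¹ ^ j := by
  classical
  set f : ℤ ⊕ ℤ → Ω → Fin 2 := fun o => Sum.elim a b o with hf
  set g : (Fin j → Fin 2) → ℤ ⊕ ℤ → Set (Fin 2) := fun v o =>
    (⋂ i, ⋂ (_ : o = Sum.inl (x i)), ({v i} : Set (Fin 2))) ∩
    (⋂ i, ⋂ (_ : o = Sum.inr (y i)), ({v i} : Set (Fin 2))) with hg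
  set S : Finset (ℤ ⊕ ℤ) :=
    (Finset.univ.image fun i => Sum.inl (x i)) ∪ (Finset.univ.image fun i => Sum.inr (y i))
    with hS
  have hgl : ∀ v i, g v (Sum.inl (x i)) = {v i} := by
    intro v i
    ext w
    simp only [hg, Set.mem_inter_iff, Set.mem_iInter, Set.mem_singleton_iff]
    constructor
    · rintro ⟨h1, _⟩; exact h1 i rfl
    · intro hw
      refine ⟨fun i' hi' => ?_, fun i' hi' => ?_⟩
      · have : x i = x i' := Sum.inl.inj hi'
        rwa [← hx this]
      · exact absurd hi' (by simp)
  have hgr : ∀ v i, g v (Sum.inr (y i)) = {v i} := by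
    intro v i
    ext w
    simp only [hg, Set.mem_inter_iff, Set.mem_iInter, Set.mem_singleton_iff]
    constructor
    · rintro ⟨_, h2⟩; exact h2 i rfl
    · intro hw
      refine ⟨fun i' hi' => ?_, fun i' hi' => ?_⟩
      · exact absurd hi' (by simp)
      · have : y i = y i' := Sum.inr.inj hi'
        rwa [← hy this]
  -- the union bound over v
  have hsub : {ω | ∀ i : Fin j, a (x i) ω = b (y i) ω} ⊆
      ⋃ v : Fin j → Fin 2, ⋂ o ∈ S, f o ⁻¹' g v o := by
    intro ω hω
    refine Set.mem_iUnion.2 ⟨fun i => a (x i) ω, ?_⟩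
    simp only [Set.mem_iInter]
    intro o ho
    simp only [hS, Finset.mem_union, Finset.mem_image, Finset.mem_univ, true_and] at ho
    rcases ho with ⟨i, rfl⟩ | ⟨i, rfl⟩
    · rw [hgl]
      simp only [Set.mem_preimage, Set.mem_singleton_iff, hf, Sum.elim_inl]
    · rw [hgr]
      simp only [Set.mem_preimage, Set.mem_singleton_iff, hf, Sum.elim_inr]
      exact (hω i).symm
  have hmu : ∀ v : Fin j → Fin 2, μ (⋂ o ∈ S, f o ⁻¹' g v o) ≤ (2:ℝ≥0∞)⁻¹ ^ j * 2⁻¹ ^ j := by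
    intro v
    have := hindep.measure_inter_preimage_eq_mul S (sets := g v) (fun o _ => fin2_measurable _)
    rw [this]
    have hdisj : Disjoint (Finset.univ.image fun i => Sum.inl (x i))
        (Finset.univ.image fun i : Fin j => Sum.inr (y i)) := by
      simp [Finset.disjoint_left]
    rw [hS, Finset.prod_union hdisj,
      Finset.prod_image (by intro i _ i' _ h; exact hx (Sum.inl.inj h)),
      Finset.prod_image (by intro i _ i' _ h; exact hy (Sum.inr.inj h))]
    have h1 : ∀ i : Fin j, μ (f (Sum.inl (x i)) ⁻¹' g v (Sum.inl (x i))) = 2⁻¹ := by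
      intro i
      rw [hgl]
      have : f (Sum.inl (x i)) ⁻¹' ({v i} : Set (Fin 2)) = {ω | a (x i) ω = v i} := by
        ext ω; simp [hf]
      rw [this, ha]
      simp [one_div]
    have h2 : ∀ i : Fin j, μ (f (Sum.inr (y i)) ⁻¹' g v (Sum.inr (y i))) = 2⁻¹ := by
      intro i
      rw [hgr]
      have : f (Sum.inr (y i)) ⁻¹' ({v i} : Set (Fin 2)) = {ω | b (y i) ω = v i} := by
        ext ω; simp [hf]
      rw [this, hb]
      simp [one_div]
    simp only [h1, h2, Finset.prod_const, Finset.card_univ, Fintype.card_fin]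
    exact le_refl _
  calc μ {ω | ∀ i : Fin j, a (x i) ω = b (y i) ω}
      ≤ μ (⋃ v : Fin j → Fin 2, ⋂ o ∈ S, f o ⁻¹' g v o) := measure_mono hsub
    _ ≤ ∑ v : Fin j → Fin 2, μ (⋂ o ∈ S, f o ⁻¹' g v o) := measure_iUnion_fintype_le _ _
    _ ≤ ∑ _v : Fin j → Fin 2, (2:ℝ≥0∞)⁻¹ ^ j * 2⁻¹ ^ j := Finset.sum_le_sum fun v _ => hmu v
    _ = (2:ℝ≥0∞) ^ j * ((2:ℝ≥0∞)⁻¹ ^ j * 2⁻¹ ^ j) := by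
        simp [Finset.sum_const, Fintype.card_fun, Fintype.card_fin]
    _ = (2:ℝ≥0∞)⁻¹ ^ j := by
        rw [← mul_assoc, ← mul_pow, ENNReal.mul_inv_cancel two_ne_zero ENNReal.ofNat_ne_top,
          one_pow, one_mul]

lemma card_strictMono (j K : ℕ) :
    Fintype.card {n : Fin j → Fin K // StrictMono n} ≤ K.choose j := by
  classical
  have hcard : Fintype.card {s // s ∈ Finset.powersetCard j (Finset.univ : Finset (Fin K))}
      = K.choose j := by
    rw [Fintype.card_coe, Finset.card_powersetCard, Finset.card_univ, Fintype.card_fin]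
  rw [← hcard]
  have himg : ∀ n : {n : Fin j → Fin K // StrictMono n},
      Finset.univ.image n.1 ∈ Finset.powersetCard j (Finset.univ : Finset (Fin K)) := by
    intro n
    rw [Finset.mem_powersetCard]
    exact ⟨Finset.subset_univ _, by
      rw [Finset.card_image_of_injective _ n.2.injective, Finset.card_univ, Fintype.card_fin]⟩
  apply Fintype.card_le_of_injective (fun n => ⟨Finset.univ.image n.1, himg n⟩)
  intro n m h
  have himeq : Finset.univ.image n.1 = Finset.univ.image m.1 := congrArg Subtype.val h
  have hcn : (Finset.univ.image n.1).card = j := by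
    rw [Finset.card_image_of_injective _ n.2.injective, Finset.card_univ, Fintype.card_fin]
  have e1 := Finset.orderEmbOfFin_unique hcn (fun i => Finset.mem_image_of_mem _ (Finset.mem_univ i)) n.2
  have e2 := Finset.orderEmbOfFin_unique hcn
    (fun i => himeq ▸ Finset.mem_image_of_mem _ (Finset.mem_univ i)) m.2
  exact Subtype.ext (e1.trans e2.symm)

lemma succ_pow_le_three_mul (d : ℕ) (hd : 1 ≤ d) : (d+1)^d ≤ 3 * d^d := by
  have hd0 : (0:ℝ) < d := by exact_mod_cast hd
  have h1 : ((d:ℝ)+1) ≤ d * Real.exp (1/d) := by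
    have h := Real.add_one_le_exp (1/(d:ℝ))
    have hne : (d:ℝ) ≠ 0 := ne_of_gt hd0
    have hinv : (d:ℝ) * (1/d) = 1 := mul_one_div_cancel hne
    have h2 := mul_le_mul_of_nonneg_left h (le_of_lt hd0)
    nlinarith [h2, hinv]
  have h2 : ((d:ℝ)+1)^d ≤ (d * Real.exp (1/d))^d :=
    pow_le_pow_left₀ (by positivity) h1 d
  have h3 : ((d:ℝ) * Real.exp (1/d))^d = d^d * Real.exp 1 := by
    rw [mul_pow, ← Real.exp_nat_mul]
    congr 2
    field_simp
  have h4 : Real.exp 1 ≤ 3 := le_of_lt (lt_trans Real.exp_one_lt_d9 (by norm_num))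
  have : ((d:ℝ)+1)^d ≤ 3 * d^d := by
    rw [h3] at h2
    nlinarith [pow_nonneg (le_of_lt hd0) d]
  exact_mod_cast this

lemma pow_self_le_three_pow_mul_factorial (D : ℕ) : D^D ≤ 3^D * D.factorial := by
  induction D with
  | zero => simp
  | succ d ih =>
    rcases Nat.eq_zero_or_pos d with rfl | hd
    · simp [Nat.factorial]
    · calc (d+1)^(d+1) = (d+1)^d * (d+1) := by rw [pow_succ]
        _ ≤ (3 * d^d) * (d+1) := Nat.mul_le_mul_right _ (succ_pow_le_three_mul d hd)
        _ ≤ (3 * (3^d * d.factorial)) * (d+1) := Nat.mul_le_mul_right _ (Nat.mul_le_mul_left _ ih)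
        _ = 3^(d+1) * (d+1).factorial := by rw [Nat.factorial_succ]; ring

lemma choose_div_bound (K : ℕ) (hK : 100 ≤ K) : K.choose (K/100) ≤ 600^(K/100) := by
  set D := K/100 with hD
  have hD1 : 1 ≤ D := (Nat.one_le_div_iff (by norm_num)).2 hK
  have hK200 : K ≤ 200 * D := by
    have h1 := Nat.div_add_mod K 100
    have h2 : K % 100 < 100 := Nat.mod_lt _ (by norm_num)
    omega
  have h1 : (K.choose D : ℝ) ≤ K^D / D.factorial := Nat.choose_le_pow_div D K
  have hfac : ((D:ℝ)^D) ≤ 3^D * D.factorial := by exact_mod_cast pow_self_le_three_pow_mul_factorial D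
  have hfacpos : (0:ℝ) < D.factorial := by exact_mod_cast D.factorial_pos
  have hDpos : (0:ℝ) < (D:ℝ)^D := by positivity
  have h2 : (K.choose D : ℝ) * D^D ≤ 600^D * D^D := by
    have hKD : ((K:ℝ))^D ≤ (200*D)^D := by
      apply pow_le_pow_left₀ (by positivity)
      exact_mod_cast hK200
    calc (K.choose D : ℝ) * D^D ≤ (K^D / D.factorial) * (3^D * D.factorial) := by
          apply mul_le_mul h1 hfac (by positivity) (by positivity)
      _ = K^D * 3^D := by field_simp
      _ ≤ (200*D)^D * 3^D := by nlinarith [pow_nonneg (show (0:ℝ) ≤ 3 by norm_num) D]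
      _ = 600^D * D^D := by
          rw [mul_pow, show (600:ℝ)^D = 200^D*3^D by rw [← mul_pow]; norm_num]
          ring
  have : (K.choose D : ℝ) ≤ 600^D := le_of_mul_le_mul_right (by linarith) hDpos
  exact_mod_cast this

lemma choose_mono_half {n : ℕ} : ∀ {d e : ℕ}, d ≤ e → e ≤ n/2 → n.choose d ≤ n.choose e := by
  intro d e hde
  induction e, hde using Nat.le_induction with
  | base => intro _; exact le_refl _
  | succ e hde ih =>
    intro he
    exact le_trans (ih (by omega)) (Nat.choose_le_succ_of_lt_half_left (by omega))

lemma term_bound (K j : ℕ) (hK : 100 ≤ K) (hjK : j ≤ K) (hj : 99*K ≤ 100*j) :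
    (K.choose j : ℝ≥0∞)^2 * 2⁻¹ ^ j ≤ 2⁻¹ ^ (61*(K/100)) := by
  set D := K/100 with hD
  have hDK : 100 * D ≤ K := by
    have := Nat.div_mul_le_self K 100; omega
  have hdD : K - j ≤ D := by
    rw [hD, Nat.le_div_iff_mul_le (by norm_num)]
    omega
  have hDhalf : D ≤ K/2 := Nat.div_le_div_left (by norm_num) (by norm_num)
  have hchoose : K.choose j ≤ 600^D := by
    calc K.choose j = K.choose (K - j) := (Nat.choose_symm hjK).symm
      _ ≤ K.choose D := choose_mono_half hdD hDhalf
      _ ≤ 600^D := choose_div_bound K hK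
  have hj99 : 99 * D ≤ j := by omega
  have e1 : (K.choose j : ℝ≥0∞)^2 ≤ (600:ℝ≥0∞)^(2*D) := by
    have : (K.choose j : ℝ≥0∞) ≤ (600:ℝ≥0∞)^D := by exact_mod_cast hchoose
    calc (K.choose j : ℝ≥0∞)^2 ≤ ((600:ℝ≥0∞)^D)^2 := by
          exact pow_le_pow_left₀ zero_le this 2
      _ = (600:ℝ≥0∞)^(2*D) := by rw [← pow_mul, mul_comm]
  have e2 : (2:ℝ≥0∞)⁻¹ ^ j ≤ 2⁻¹ ^ (99*D) := by
    have : (2:ℝ≥0∞)⁻¹ ^ j = 2⁻¹^(99*D) * 2⁻¹^(j - 99*D) := by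
      rw [← pow_add]; congr 1; omega
    rw [this]
    refine mul_le_of_le_one_right' (pow_le_one' (by simp) _)
  calc (K.choose j : ℝ≥0∞)^2 * 2⁻¹ ^ j ≤ (600:ℝ≥0∞)^(2*D) * 2⁻¹^(99*D) := by
        exact mul_le_mul' e1 e2
    _ ≤ ((2:ℝ≥0∞)^19)^(2*D) * 2⁻¹^(99*D) := by
        apply mul_le_mul_left
        apply pow_le_pow_left₀ zero_le
        norm_num
    _ = (2:ℝ≥0∞)^(38*D) * (2⁻¹^(38*D) * 2⁻¹^(61*D)) := by
        rw [← pow_mul, ← pow_add]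
        ring_nf
    _ = 2⁻¹^(61*D) := by
        rw [← mul_assoc, ← mul_pow, ENNReal.mul_inv_cancel two_ne_zero ENNReal.ofNat_ne_top,
          one_pow, one_mul]

lemma fixedSTK {Ω : Type} [MeasurableSpace Ω] (μ : Measure Ω)
    (a b : ℤ → Ω → Fin 2)
    (hindep : iIndepFun (m := fun _ : ℤ ⊕ ℤ => (inferInstance : MeasurableSpace (Fin 2)))
      (fun o : ℤ ⊕ ℤ => Sum.elim a b o) μ)
    (ha : ∀ (i : ℤ) (v : Fin 2), μ {ω | a i ω = v} = 1 / 2)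
    (hb : ∀ (i : ℤ) (v : Fin 2), μ {ω | b i ω = v} = 1 / 2)
    (s t : ℤ) (K : ℕ) (hK : 100 ≤ K) :
    μ {ω | ∃ j : ℕ, (0.99:ℝ) * K ≤ (j:ℝ) ∧ ∃ n m : Fin j → Fin K, StrictMono n ∧ StrictMono m ∧
        ∀ i : Fin j, a (s + 1 + (n i : ℤ)) ω = b (t + 1 + (m i : ℤ)) ω}
      ≤ (K+1) * 2⁻¹ ^ (61*(K/100)) := by
  classical
  have hEj : ∀ j : ℕ, j ≤ K → 99*K ≤ 100*j →
      μ {ω | ∃ n m : Fin j → Fin K, StrictMono n ∧ StrictMono m ∧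
          ∀ i : Fin j, a (s + 1 + (n i : ℤ)) ω = b (t + 1 + (m i : ℤ)) ω}
        ≤ 2⁻¹ ^ (61*(K/100)) := by
    intro j hjK hj
    have hinj : ∀ (c : ℤ) (n : Fin j → Fin K), StrictMono n →
        Function.Injective (fun i : Fin j => c + 1 + ((n i : ℕ) : ℤ)) := by
      intro c n hn i1 i2 h
      simp only [add_right_inj, Nat.cast_inj] at h
      exact hn.injective (Fin.val_injective h)
    have hsub : {ω | ∃ n m : Fin j → Fin K, StrictMono n ∧ StrictMono m ∧
          ∀ i : Fin j, a (s + 1 + (n i : ℤ)) ω = b (t + 1 + (m i : ℤ)) ω} ⊆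
        ⋃ (n : {n : Fin j → Fin K // StrictMono n}) (m : {m : Fin j → Fin K // StrictMono m}),
          {ω | ∀ i : Fin j, a (s + 1 + (n.1 i : ℤ)) ω = b (t + 1 + (m.1 i : ℤ)) ω} := by
      rintro ω ⟨n, m, hn, hm, hmatch⟩
      exact Set.mem_iUnion.2 ⟨⟨n, hn⟩, Set.mem_iUnion.2 ⟨⟨m, hm⟩, hmatch⟩⟩
    calc μ _ ≤ μ (⋃ (n : {n : Fin j → Fin K // StrictMono n})
            (m : {m : Fin j → Fin K // StrictMono m}),
          {ω | ∀ i : Fin j, a (s + 1 + (n.1 i : ℤ)) ω = b (t + 1 + (m.1 i : ℤ)) ω}) :=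
        measure_mono hsub
      _ ≤ ∑ n : {n : Fin j → Fin K // StrictMono n},
            μ (⋃ (m : {m : Fin j → Fin K // StrictMono m}),
            {ω | ∀ i : Fin j, a (s + 1 + (n.1 i : ℤ)) ω = b (t + 1 + (m.1 i : ℤ)) ω}) :=
        measure_iUnion_fintype_le _ _
      _ ≤ ∑ n : {n : Fin j → Fin K // StrictMono n},
            ∑ m : {m : Fin j → Fin K // StrictMono m},
            μ {ω | ∀ i : Fin j, a (s + 1 + (n.1 i : ℤ)) ω = b (t + 1 + (m.1 i : ℤ)) ω} :=
        Finset.sum_le_sum fun n _ => measure_iUnion_fintype_le _ _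
      _ ≤ ∑ _n : {n : Fin j → Fin K // StrictMono n},
            ∑ _m : {m : Fin j → Fin K // StrictMono m}, (2:ℝ≥0∞)⁻¹ ^ j := by
        refine Finset.sum_le_sum fun n _ => Finset.sum_le_sum fun m _ => ?_
        exact perEvent μ a b hindep ha hb j _ _ (hinj s n.1 n.2) (hinj t m.1 m.2)
      _ = (Fintype.card {n : Fin j → Fin K // StrictMono n} : ℝ≥0∞) *
            (Fintype.card {m : Fin j → Fin K // StrictMono m} : ℝ≥0∞) * 2⁻¹ ^ j := by
        simp [Finset.sum_const, Finset.card_univ, nsmul_eq_mul]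
        ring
      _ ≤ (K.choose j : ℝ≥0∞) * (K.choose j : ℝ≥0∞) * 2⁻¹ ^ j := by
        refine mul_le_mul' (mul_le_mul' ?_ ?_) le_rfl <;>
          exact_mod_cast Nat.cast_le.2 (card_strictMono j K)
      _ = (K.choose j : ℝ≥0∞)^2 * 2⁻¹ ^ j := by ring
      _ ≤ 2⁻¹ ^ (61*(K/100)) := term_bound K j hK hjK hj
  -- union over j
  have hsubj : {ω | ∃ j : ℕ, (0.99:ℝ) * K ≤ (j:ℝ) ∧ ∃ n m : Fin j → Fin K,
        StrictMono n ∧ StrictMono m ∧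
        ∀ i : Fin j, a (s + 1 + (n i : ℤ)) ω = b (t + 1 + (m i : ℤ)) ω} ⊆
      ⋃ j ∈ Finset.range (K+1),
        if 99*K ≤ 100*j then
          {ω | ∃ n m : Fin j → Fin K, StrictMono n ∧ StrictMono m ∧
            ∀ i : Fin j, a (s + 1 + (n i : ℤ)) ω = b (t + 1 + (m i : ℤ)) ω}
        else (∅ : Set Ω) := by
    rintro ω ⟨j, hj99, n, m, hn, hm, hmatch⟩
    have hjK : j ≤ K := by
      have := Fintype.card_le_of_injective n hn.injective
      simpa using this
    have hj' : 99*K ≤ 100*j := by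
      have : (99:ℝ)*K ≤ 100*j := by nlinarith
      exact_mod_cast this
    refine Set.mem_iUnion₂.2 ⟨j, Finset.mem_range.2 (by omega), ?_⟩
    rw [if_pos hj']
    exact ⟨n, m, hn, hm, hmatch⟩
  calc μ _ ≤ ∑ j ∈ Finset.range (K+1), μ (if 99*K ≤ 100*j then
          {ω | ∃ n m : Fin j → Fin K, StrictMono n ∧ StrictMono m ∧
            ∀ i : Fin j, a (s + 1 + (n i : ℤ)) ω = b (t + 1 + (m i : ℤ)) ω}
        else (∅ : Set Ω)) :=
      le_trans (measure_mono hsubj) (measure_biUnion_finset_le _ _)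
    _ ≤ ∑ _j ∈ Finset.range (K+1), 2⁻¹ ^ (61*(K/100)) := by
      refine Finset.sum_le_sum fun j hj => ?_
      by_cases h : 99*K ≤ 100*j
      · rw [if_pos h]
        exact hEj j (by simpa using Nat.lt_succ_iff.1 (Finset.mem_range.1 hj)) h
      · rw [if_neg h]; simp
    _ = (K+1) * 2⁻¹ ^ (61*(K/100)) := by
      simp [Finset.sum_const, Finset.card_range, nsmul_eq_mul]

lemma one_sub_pow_inv : (2:ℝ≥0∞)⁻¹ ≤ 1 - 2⁻¹^60 := by
  have h : (2:ℝ≥0∞)⁻¹^60 ≤ 2⁻¹ := by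
    calc (2:ℝ≥0∞)⁻¹^60 = 2⁻¹^59 * 2⁻¹ := by rw [← pow_succ]
      _ ≤ 1 * 2⁻¹ := by
          apply mul_le_mul_left
          exact pow_le_one' (by simp) _
      _ = 2⁻¹ := one_mul _
  calc (2:ℝ≥0∞)⁻¹ = 1 - 2⁻¹ := by
        rw [ENNReal.one_sub_inv_two]
    _ ≤ 1 - 2⁻¹^60 := tsub_le_tsub_left h 1

lemma geom200 : ∑' L : ℕ, (2:ℝ≥0∞)⁻¹ ^ (60*(L/200)) ≤ 400 := by
  have key : ∑' L : ℕ, (2:ℝ≥0∞)⁻¹ ^ (60*(L/200))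
      = ∑' p : ℕ × Fin 200, (2:ℝ≥0∞)⁻¹ ^ (60*p.1) := by
    rw [← Equiv.tsum_eq (Nat.divModEquiv 200).symm (fun L => (2:ℝ≥0∞)⁻¹ ^ (60*(L/200)))]
    apply tsum_congr
    intro p
    congr 2
    simp only [Nat.divModEquiv_symm_apply]
    have := p.2.is_lt
    omega
  rw [key, ENNReal.tsum_prod']
  have inner : ∀ D : ℕ, ∑' _r : Fin 200, (2:ℝ≥0∞)⁻¹ ^ (60*D) = 200 * (2⁻¹^60)^D := by
    intro D
    rw [tsum_fintype]
    simp [Finset.sum_const, nsmul_eq_mul, pow_mul]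
  calc ∑' (D : ℕ) (_r : Fin 200), (2:ℝ≥0∞)⁻¹ ^ (60*D)
      = ∑' D : ℕ, 200 * ((2:ℝ≥0∞)⁻¹^60)^D := by exact tsum_congr inner
    _ = 200 * (1 - 2⁻¹^60)⁻¹ := by rw [ENNReal.tsum_mul_left, ENNReal.tsum_geometric]
    _ ≤ 200 * 2 := by
        apply mul_le_mul_right
        calc (1 - (2:ℝ≥0∞)⁻¹^60)⁻¹ ≤ (2⁻¹:ℝ≥0∞)⁻¹ := ENNReal.inv_le_inv.2 one_sub_pow_inv
          _ = 2 := by simp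
    _ = 400 := by norm_num

lemma decay (N K : ℕ) (hNK : N < K) (hN : 100 ≤ N) :
    ((K:ℝ≥0∞)+1) * 2⁻¹^(61*(K/100)) ≤
      2^7 * 2⁻¹^(60*(N/200)) * 2⁻¹^(60*((K-N)/200)) := by
  set D := K/100 with hD
  have h1 : K + 1 ≤ 128 * 2^D := by
    have hdm := Nat.div_add_mod K 100
    have hmod : K % 100 < 100 := Nat.mod_lt _ (by norm_num)
    have hp : D + 1 ≤ 2^D := Nat.lt_two_pow_self
    calc K + 1 ≤ 100*(D+1) + 1 := by omega
      _ ≤ 128 * 2^D := by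
          have : 100*(D+1) ≤ 100*2^D := Nat.mul_le_mul_left _ hp
          have h2 : 1 ≤ 2^D := Nat.one_le_two_pow
          omega
  have h1' : ((K:ℝ≥0∞)+1) ≤ 2^7 * 2^D := by
    have : ((K+1 : ℕ) : ℝ≥0∞) ≤ ((128 * 2^D : ℕ) : ℝ≥0∞) := Nat.cast_le.2 h1
    push_cast at this
    convert this using 2 <;> norm_num
  have hsplit : 60*(N/200) + 60*((K-N)/200) ≤ 60*D := by
    have hsum : N/200 + (K-N)/200 ≤ K/200 := by
      rw [Nat.le_div_iff_mul_le (by norm_num : 0 < 200)]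
      have a1 := Nat.div_mul_le_self N 200
      have a2 := Nat.div_mul_le_self (K-N) 200
      have : (N/200 + (K-N)/200) * 200 = (N/200)*200 + ((K-N)/200)*200 := by ring
      omega
    have h200 : K/200 ≤ K/100 := Nat.div_le_div_left (by norm_num) (by norm_num)
    omega
  calc ((K:ℝ≥0∞)+1) * 2⁻¹^(61*D)
      ≤ (2^7 * 2^D) * 2⁻¹^(61*D) := mul_le_mul_left h1' _
    _ = 2^7 * (2^D * 2⁻¹^D) * 2⁻¹^(60*D) := by
        rw [show 61*D = D + 60*D by ring, pow_add]
        ring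
    _ = 2^7 * 2⁻¹^(60*D) := by
        rw [← mul_pow, ENNReal.mul_inv_cancel two_ne_zero ENNReal.ofNat_ne_top, one_pow, mul_one]
    _ ≤ 2^7 * (2⁻¹^(60*(N/200) + 60*((K-N)/200))) := by
        apply mul_le_mul_right
        rw [show 60*D = (60*(N/200) + 60*((K-N)/200)) + (60*D - (60*(N/200) + 60*((K-N)/200)))
          by omega, pow_add]
        exact mul_le_of_le_one_right' (pow_le_one' (by simp) _)
    _ = 2^7 * 2⁻¹^(60*(N/200)) * 2⁻¹^(60*((K-N)/200)) := by
        rw [pow_add]; ring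

lemma inv_two_pow_anti {m n : ℕ} (h : m ≤ n) : (2:ℝ≥0∞)⁻¹^n ≤ 2⁻¹^m := by
  rw [show n = m + (n-m) by omega, pow_add]
  exact mul_le_of_le_one_right' (pow_le_one' (by simp) _)

lemma perST {Ω : Type} [MeasurableSpace Ω] (μ : Measure Ω)
    (a b : ℤ → Ω → Fin 2)
    (hindep : iIndepFun (m := fun _ : ℤ ⊕ ℤ => (inferInstance : MeasurableSpace (Fin 2)))
      (fun o : ℤ ⊕ ℤ => Sum.elim a b o) μ)
    (ha : ∀ (i : ℤ) (v : Fin 2), μ {ω | a i ω = v} = 1 / 2)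
    (hb : ∀ (i : ℤ) (v : Fin 2), μ {ω | b i ω = v} = 1 / 2)
    (s t : ℤ) (N : ℕ) (hN : 100 ≤ N) :
    μ {ω | ∃ K : ℕ, N < K ∧ ∃ j : ℕ, (0.99:ℝ) * K ≤ (j:ℝ) ∧
        ∃ n m : Fin j → Fin K, StrictMono n ∧ StrictMono m ∧
        ∀ i : Fin j, a (s + 1 + (n i : ℤ)) ω = b (t + 1 + (m i : ℤ)) ω}
      ≤ 2^16 * 2⁻¹ ^ (60*(N/200)) := by
  classical
  set EK : ℕ → Set Ω := fun K =>
    {ω | ∃ j : ℕ, (0.99:ℝ) * K ≤ (j:ℝ) ∧ ∃ n m : Fin j → Fin K, StrictMono n ∧ StrictMono m ∧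
        ∀ i : Fin j, a (s + 1 + (n i : ℤ)) ω = b (t + 1 + (m i : ℤ)) ω} with hEK
  have hsub : {ω | ∃ K : ℕ, N < K ∧ ∃ j : ℕ, (0.99:ℝ) * K ≤ (j:ℝ) ∧
        ∃ n m : Fin j → Fin K, StrictMono n ∧ StrictMono m ∧
        ∀ i : Fin j, a (s + 1 + (n i : ℤ)) ω = b (t + 1 + (m i : ℤ)) ω} ⊆
      ⋃ K : ℕ, (if N < K then EK K else ∅) := by
    rintro ω ⟨K, hK, rest⟩
    exact Set.mem_iUnion.2 ⟨K, by rw [if_pos hK]; exact rest⟩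
  set F : ℕ → ℝ≥0∞ := fun K => if N < K then (2:ℝ≥0∞)⁻¹^(60*((K-N)/200)) else 0 with hF
  have hperK : ∀ K : ℕ, μ (if N < K then EK K else ∅) ≤
      2^7 * 2⁻¹^(60*(N/200)) * F K := by
    intro K
    by_cases h : N < K
    · rw [if_pos h, hF]
      simp only []
      rw [if_pos h]
      calc μ (EK K) ≤ (K+1) * 2⁻¹ ^ (61*(K/100)) :=
            fixedSTK μ a b hindep ha hb s t K (by omega)
        _ ≤ 2^7 * 2⁻¹^(60*(N/200)) * 2⁻¹^(60*((K-N)/200)) := decay N K h hN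
    · rw [if_neg h, hF]
      simp only []
      rw [if_neg h]
      simp
  have htsumF : ∑' K : ℕ, F K ≤ 400 := by
    have hsplit := Summable.sum_add_tsum_nat_add' (f := F) (k := N+1) ENNReal.summable
    rw [← hsplit]
    have hzero : ∑ i ∈ Finset.range (N+1), F i = 0 := by
      apply Finset.sum_eq_zero
      intro i hi
      rw [hF]
      simp only []
      rw [if_neg (by simp at hi; omega)]
    rw [hzero, zero_add]
    calc ∑' L : ℕ, F (L + (N+1))
        ≤ ∑' L : ℕ, (2:ℝ≥0∞)⁻¹^(60*(L/200)) := by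
          apply ENNReal.tsum_le_tsum
          intro L
          rw [hF]
          simp only []
          rw [if_pos (by omega)]
          exact inv_two_pow_anti (by
            have : L/200 ≤ (L + (N+1) - N)/200 := Nat.div_le_div_right (by omega)
            omega)
      _ ≤ 400 := geom200
  calc μ _ ≤ ∑' K : ℕ, μ (if N < K then EK K else ∅) :=
        le_trans (measure_mono hsub) (measure_iUnion_le _)
    _ ≤ ∑' K : ℕ, 2^7 * 2⁻¹^(60*(N/200)) * F K := ENNReal.tsum_le_tsum hperK
    _ = 2^7 * 2⁻¹^(60*(N/200)) * ∑' K : ℕ, F K := ENNReal.tsum_mul_left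
    _ ≤ 2^7 * 2⁻¹^(60*(N/200)) * 400 := mul_le_mul_right htsumF _
    _ ≤ 2^16 * 2⁻¹ ^ (60*(N/200)) := by
        rw [mul_comm (2^7 : ℝ≥0∞) _, mul_assoc, mul_comm (2^16 : ℝ≥0∞) _]
        apply mul_le_mul_right
        norm_num

lemma pow27 (q : ℕ) : 40000*(q+1) ≤ 2^(q+27) := by
  induction q with
  | zero => norm_num
  | succ q ih =>
    have h40 : 40000 ≤ 2^(q+27) := le_trans (by omega) ih
    calc 40000*(q+1+1) = 40000*(q+1) + 40000 := by ring
      _ ≤ 2^(q+27) + 2^(q+27) := add_le_add ih h40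
      _ = 2^(q+1+27) := by rw [show q+1+27 = (q+27)+1 by ring, pow_succ]; ring

lemma endgame (N : ℕ) (hN : 1000000 ≤ N) :
    ((200*N+1 : ℕ):ℝ≥0∞) * ((200*N+1 : ℕ):ℝ≥0∞) * (2^16 * 2⁻¹^(60*(N/200)))
      ≤ ENNReal.ofReal (Real.exp (-(1/100) * N)) := by
  set q := N/100 with hq
  set E := N/200 with hE
  have hcard : 200*N+1 ≤ 2^(q+27) := by
    refine le_trans ?_ (pow27 q)
    omega
  have hcast : ((200*N+1 : ℕ):ℝ≥0∞) ≤ 2^(q+27) := by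
    calc ((200*N+1 : ℕ):ℝ≥0∞) ≤ ((2^(q+27) : ℕ):ℝ≥0∞) := Nat.cast_le.2 hcard
      _ = 2^(q+27) := by push_cast; norm_num
  have hq2E : q ≤ 2*E + 1 := by omega
  have step1 : ((200*N+1 : ℕ):ℝ≥0∞) * ((200*N+1 : ℕ):ℝ≥0∞) * (2^16 * 2⁻¹^(60*E))
      ≤ 2^72 * 2⁻¹^(56*E) := by
    calc ((200*N+1 : ℕ):ℝ≥0∞) * ((200*N+1 : ℕ):ℝ≥0∞) * (2^16 * 2⁻¹^(60*E))
        ≤ (2^(q+27)) * (2^(q+27)) * (2^16 * 2⁻¹^(60*E)) := by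
          exact mul_le_mul' (mul_le_mul' hcast hcast) le_rfl
      _ = 2^(2*q+70) * 2⁻¹^(60*E) := by
          rw [← pow_add, ← mul_assoc, ← pow_add]
          ring_nf
      _ ≤ 2^(4*E+72) * 2⁻¹^(60*E) := by
          apply mul_le_mul_left
          exact pow_le_pow_right' one_le_two (by omega)
      _ = 2^72 * (2^(4*E) * 2⁻¹^(4*E)) * 2⁻¹^(56*E) := by
          rw [pow_add, show 60*E = 4*E + 56*E by ring, pow_add]
          ring
      _ = 2^72 * 2⁻¹^(56*E) := by
          rw [← mul_pow, ENNReal.mul_inv_cancel two_ne_zero ENNReal.ofNat_ne_top, one_pow, mul_one]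
  refine le_trans step1 ?_
  have hofreal : (2:ℝ≥0∞)^72 * 2⁻¹^(56*E) = ENNReal.ofReal ((2:ℝ)^72 * 2⁻¹^(56*E)) := by
    rw [ENNReal.ofReal_mul (by positivity), ENNReal.ofReal_pow (by norm_num),
      ENNReal.ofReal_pow (by norm_num), ENNReal.ofReal_inv_of_pos (by norm_num)]
    norm_num
  rw [hofreal]
  apply ENNReal.ofReal_le_ofReal
  -- real inequality
  have h2e : (2:ℝ) ≤ Real.exp 1 := by
    have := Real.add_one_le_exp (1:ℝ); linarith
  have hhalf : (2:ℝ)⁻¹ ≤ Real.exp (-(1/2)) := by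
    have hsq : Real.exp (1/2) ^ (2:ℕ) = Real.exp 1 := by
      rw [← Real.exp_nat_mul]; norm_num
    have h1 : Real.exp 1 < 2.7182818286 := Real.exp_one_lt_d9
    have hx : Real.exp (1/2) ≤ 2 := by
      by_contra hc
      push_neg at hc
      have h4 : (2:ℝ)^(2:ℕ) < Real.exp (1/2) ^ (2:ℕ) := pow_lt_pow_left₀ hc (by norm_num) two_ne_zero
      rw [hsq] at h4
      norm_num at h4 h1
      linarith
    rw [Real.exp_neg]
    exact inv_anti₀ (Real.exp_pos _) hx
  have e1 : (2:ℝ)^72 ≤ Real.exp 72 := by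
    calc (2:ℝ)^72 ≤ Real.exp 1 ^ 72 := pow_le_pow_left₀ (by norm_num) h2e 72
      _ = Real.exp 72 := by rw [← Real.exp_nat_mul]; norm_num
  have e2 : ((2:ℝ)⁻¹)^(56*E) ≤ Real.exp (-(28*E)) := by
    calc ((2:ℝ)⁻¹)^(56*E) ≤ Real.exp (-(1/2)) ^ (56*E) :=
          pow_le_pow_left₀ (by norm_num) hhalf _
      _ = Real.exp ((56*E : ℕ) * (-(1/2))) := by rw [← Real.exp_nat_mul]
      _ = Real.exp (-(28*E)) := by
          congr 1
          push_cast
          ring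
  have hEN : (N:ℝ) - 199 ≤ 200*(E:ℝ) := by
    have h : N ≤ 200*E + 199 := by omega
    have h2 := (Nat.cast_le (α := ℝ)).2 h
    push_cast at h2
    linarith
  calc (2:ℝ)^72 * (2:ℝ)⁻¹^(56*E) ≤ Real.exp 72 * Real.exp (-(28*E)) := by
        apply mul_le_mul e1 e2 (by positivity) (Real.exp_nonneg _)
    _ = Real.exp (72 - 28*E) := by rw [← Real.exp_add]; ring_nf
    _ ≤ Real.exp (-(1/100) * N) := by
        apply Real.exp_le_exp.2
        have hN' : (1000000:ℝ) ≤ N := by exact_mod_cast hN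
        linarith

/-- Let `a b : ℤ → Ω → Fin 2` be i.i.d. uniform sequences (all coordinates of
`a` and `b` jointly independent and uniform on a two-letter alphabet). There is an absolute
constant `r > 0` such that for all sufficiently large `N`, the probability that there exist
shifts `s, t ∈ [-100N, 100N]` and a length `K > N` such that the words
`(a_{s+1}, …, a_{s+K})` and `(b_{t+1}, …, b_{t+K})` have a common subsequence of length at
least `0.99 K` is at most `e^{-rN}`. -/
theorem stmt_17 : ∃ r : ℝ, 0 < r ∧ ∃ N₀ : ℕ, ∀ N : ℕ, N₀ ≤ N →
    ∀ {Ω : Type} [MeasurableSpace Ω] (μ : Measure Ω), IsProbabilityMeasure μ →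
    ∀ (a b : ℤ → Ω → Fin 2),
    (∀ i, Measurable (a i)) → (∀ i, Measurable (b i)) →
    iIndepFun (m := fun _ : ℤ ⊕ ℤ => (inferInstance : MeasurableSpace (Fin 2)))
      (fun o : ℤ ⊕ ℤ => Sum.elim a b o) μ →
    (∀ (i : ℤ) (v : Fin 2), μ {ω | a i ω = v} = 1 / 2) →
    (∀ (i : ℤ) (v : Fin 2), μ {ω | b i ω = v} = 1 / 2) →
    μ {ω | ∃ s t : ℤ, |s| ≤ 100 * (N : ℤ) ∧ |t| ≤ 100 * (N : ℤ) ∧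
        ∃ K : ℕ, N < K ∧ ∃ j : ℕ, (0.99 : ℝ) * K ≤ (j : ℝ) ∧
          ∃ n m : Fin j → Fin K, StrictMono n ∧ StrictMono m ∧
            ∀ i : Fin j, a (s + 1 + (n i : ℤ)) ω = b (t + 1 + (m i : ℤ)) ω}
      ≤ ENNReal.ofReal (Real.exp (-r * N)) := by
  refine ⟨1/100, by norm_num, 1000000, ?_⟩
  intro N hN Ω _ μ hμ a b hma hmb hindep ha hb
  classical
  set I : Finset ℤ := Finset.Icc (-(100*(N:ℤ))) (100*(N:ℤ)) with hI
  set EST : ℤ → ℤ → Set Ω := fun s t =>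
    {ω | ∃ K : ℕ, N < K ∧ ∃ j : ℕ, (0.99:ℝ) * K ≤ (j:ℝ) ∧
        ∃ n m : Fin j → Fin K, StrictMono n ∧ StrictMono m ∧
        ∀ i : Fin j, a (s + 1 + (n i : ℤ)) ω = b (t + 1 + (m i : ℤ)) ω} with hEST
  have hsub : {ω | ∃ s t : ℤ, |s| ≤ 100 * (N : ℤ) ∧ |t| ≤ 100 * (N : ℤ) ∧
        ∃ K : ℕ, N < K ∧ ∃ j : ℕ, (0.99 : ℝ) * K ≤ (j : ℝ) ∧
          ∃ n m : Fin j → Fin K, StrictMono n ∧ StrictMono m ∧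
            ∀ i : Fin j, a (s + 1 + (n i : ℤ)) ω = b (t + 1 + (m i : ℤ)) ω} ⊆
      ⋃ s ∈ I, ⋃ t ∈ I, EST s t := by
    rintro ω ⟨s, t, hs, ht, rest⟩
    have hs' : s ∈ I := by rw [hI, Finset.mem_Icc]; constructor <;> [linarith [abs_le.1 hs |>.1]; exact (abs_le.1 hs).2]
    have ht' : t ∈ I := by rw [hI, Finset.mem_Icc]; constructor <;> [linarith [abs_le.1 ht |>.1]; exact (abs_le.1 ht).2]
    exact Set.mem_iUnion₂.2 ⟨s, hs', Set.mem_iUnion₂.2 ⟨t, ht', rest⟩⟩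
  have hcard : I.card = 200*N+1 := by
    rw [hI, Int.card_Icc]
    have : (100*(N:ℤ) + 1 - (-(100*(N:ℤ)))) = ((200*N+1 : ℕ) : ℤ) := by push_cast; ring
    rw [this, Int.toNat_natCast]
  have hN100 : 100 ≤ N := by omega
  calc μ _ ≤ ∑ s ∈ I, μ (⋃ t ∈ I, EST s t) :=
        le_trans (measure_mono hsub) (measure_biUnion_finset_le _ _)
    _ ≤ ∑ s ∈ I, ∑ t ∈ I, μ (EST s t) :=
        Finset.sum_le_sum fun s _ => measure_biUnion_finset_le _ _
    _ ≤ ∑ _s ∈ I, ∑ _t ∈ I, (2^16 * 2⁻¹ ^ (60*(N/200)) : ℝ≥0∞) := by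
        refine Finset.sum_le_sum fun s _ => Finset.sum_le_sum fun t _ => ?_
        exact perST μ a b hindep ha hb s t N hN100
    _ = ((200*N+1 : ℕ):ℝ≥0∞) * ((200*N+1 : ℕ):ℝ≥0∞) * (2^16 * 2⁻¹^(60*(N/200))) := by
        simp only [Finset.sum_const, hcard, nsmul_eq_mul]
        ring
    _ ≤ ENNReal.ofReal (Real.exp (-(1/100) * N)) := endgame N hN
end
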